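/- Let Σ and Π be finite nonempty alphabets, μ and ν spherical ensembles of probability measures on Σ* and Π* respectively, and f : Σ* → Π* an injective map with |f(x)| = |x| for all x. Suppose there are a real constant C > 0 and a natural number c such that, with d(k) := C·k^c, one has ν_{|x|}(f(x)) ≥ μ_{|x|}(x)/d(|x|) for every nonempty word x ∈ Σ*. If H ⊆ Π* is strongly generic with respect to ν, then f^{-1}(H) is strongly generic with respect to μ. (This is the measure-theoretic content of part (b) of the theorem that CM-reductions are SGPtime reductions.) -/

import Mathlib

/-- The measure `μ_n(T) = Σ_{x ∈ T ∩ Σ^n} μ_n(x)` of a set of words, where words of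
length `n` are represented as `List.ofFn w` for `w : Fin n → A`. -/
noncomputable def sphMeasure {A : Type*} [Fintype A]
    (μ : ℕ → List A → ℝ) (n : ℕ) (T : Set (List A)) : ℝ :=
  ∑ w : Fin n → A, Set.indicator T (μ n) (List.ofFn w)

lemma sph_add_compl {A : Type*} [Fintype A] (μ : ℕ → List A → ℝ) (n : ℕ)
    (hsum : ∑ w : Fin n → A, μ n (List.ofFn w) = 1) (T : Set (List A)) :
    sphMeasure μ n T + sphMeasure μ n Tᶜ = 1 := by
  rw [sphMeasure, sphMeasure, ← Finset.sum_add_distrib, ← hsum]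
  exact Finset.sum_congr rfl fun w _ => Set.indicator_self_add_compl_apply T (μ n) _

lemma sph_nonneg {A : Type*} [Fintype A] (μ : ℕ → List A → ℝ) (n : ℕ)
    (hpos : ∀ x : List A, x.length = n → 0 ≤ μ n x) (T : Set (List A)) :
    0 ≤ sphMeasure μ n T :=
  Finset.sum_nonneg fun w _ =>
    Set.indicator_nonneg (fun x _ => hpos _ (List.length_ofFn (f := w))) _

/-- Let `Σ` (here `A`) and `Π` (here `B`) be finite nonempty alphabets,
`μ`, `ν` spherical ensembles of probability measures on `Σ*`, `Π*`, and
`f : Σ* → Π*` injective with `|f(x)| = |x|`.  Suppose there are a real `C > 0` and a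
natural number `c` such that, with `d(k) := C·k^c`, one has
`ν_{|x|}(f(x)) ≥ μ_{|x|}(x)/d(|x|)` for every nonempty word `x`.  If `H ⊆ Π*` is
strongly generic with respect to `ν`, then `f⁻¹(H)` is strongly generic with respect
to `μ`.  (Measure-theoretic content of part (b) of: CM-reductions are SGPtime
reductions.) -/
theorem cm_reduction_strongly_generic
    {A B : Type*} [Fintype A] [Nonempty A] [Fintype B] [Nonempty B]
    (μ : ℕ → List A → ℝ) (ν : ℕ → List B → ℝ)
    (hμpos : ∀ n : ℕ, 1 ≤ n → ∀ x : List A, x.length = n → 0 ≤ μ n x)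
    (hμsum : ∀ n : ℕ, 1 ≤ n → ∑ w : Fin n → A, μ n (List.ofFn w) = 1)
    (hνpos : ∀ n : ℕ, 1 ≤ n → ∀ y : List B, y.length = n → 0 ≤ ν n y)
    (hνsum : ∀ n : ℕ, 1 ≤ n → ∑ w : Fin n → B, ν n (List.ofFn w) = 1)
    (f : List A → List B)
    (hinj : Function.Injective f)
    (hlen : ∀ x : List A, (f x).length = x.length)
    (C : ℝ) (hC : 0 < C) (c : ℕ)
    (hcm : ∀ x : List A, x ≠ [] →
      μ x.length x / (C * (x.length : ℝ) ^ c) ≤ ν x.length (f x))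
    (H : Set (List B))
    (hH₁ : Filter.Tendsto (fun m : ℕ => sphMeasure ν m H) Filter.atTop (nhds 1))
    (hH₂ : ∀ k : ℕ,
      Filter.Tendsto (fun m : ℕ => (m : ℝ) ^ k * (1 - sphMeasure ν m H))
        Filter.atTop (nhds 0)) :
    Filter.Tendsto (fun n : ℕ => sphMeasure μ n (f ⁻¹' H)) Filter.atTop (nhds 1) ∧
    ∀ k : ℕ,
      Filter.Tendsto (fun n : ℕ => (n : ℝ) ^ k * (1 - sphMeasure μ n (f ⁻¹' H)))
        Filter.atTop (nhds 0) := by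
  -- key bounds for n ≥ 1
  have key : ∀ n : ℕ, 1 ≤ n →
      0 ≤ 1 - sphMeasure μ n (f ⁻¹' H) ∧
      1 - sphMeasure μ n (f ⁻¹' H) ≤ C * (n : ℝ) ^ c * (1 - sphMeasure ν n H) := by
    intro n hn
    have hnpos : (0 : ℝ) < (n : ℝ) ^ c := pow_pos (by exact_mod_cast hn) c
    have hCn : (0 : ℝ) < C * (n : ℝ) ^ c := mul_pos hC hnpos
    have hμc : 1 - sphMeasure μ n (f ⁻¹' H) = sphMeasure μ n (f ⁻¹' H)ᶜ := by
      have := sph_add_compl μ n (hμsum n hn) (f ⁻¹' H); linarith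
    have hνc : 1 - sphMeasure ν n H = sphMeasure ν n Hᶜ := by
      have := sph_add_compl ν n (hνsum n hn) H; linarith
    constructor
    · rw [hμc]; exact sph_nonneg μ n (fun x hx => hμpos n hn x hx) _
    rw [hμc, hνc]
    classical
    -- the injection on words
    have hlen' : ∀ w : Fin n → A, (f (List.ofFn w)).length = n := by
      intro w; rw [hlen, List.length_ofFn]
    set g : (Fin n → A) → (Fin n → B) :=
      fun w i => (f (List.ofFn w)).get (Fin.cast (hlen' w).symm i) with hg
    have hofn : ∀ w : Fin n → A, List.ofFn (g w) = f (List.ofFn w) := by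
      intro w
      apply List.ext_getElem
      · simp [hlen' w]
      · intro i h1 h2
        simp [hg, List.getElem_ofFn]
    have hginj : Function.Injective g := by
      intro w1 w2 h
      apply List.ofFn_injective.eq_iff.mp
      apply hinj
      rw [← hofn w1, ← hofn w2, h]
    -- pointwise bound
    have hpoint : ∀ w : Fin n → A,
        Set.indicator (f ⁻¹' H)ᶜ (μ n) (List.ofFn w)
          ≤ C * (n : ℝ) ^ c * Set.indicator Hᶜ (ν n) (List.ofFn (g w)) := by
      intro w
      rw [hofn w]
      by_cases h : f (List.ofFn w) ∈ H
      · rw [Set.indicator_of_notMem (by simpa using h), Set.indicator_of_notMem (by simpa using h),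
            mul_zero]
      · rw [Set.indicator_of_mem (by simpa using h), Set.indicator_of_mem (by simpa using h)]
        have hne : List.ofFn w ≠ [] := by
          intro hnil
          have := congrArg List.length hnil
          simp at this
          omega
        have := hcm (List.ofFn w) hne
        rw [List.length_ofFn] at this
        rw [div_le_iff₀ hCn] at this
        linarith
    calc sphMeasure μ n (f ⁻¹' H)ᶜ
        ≤ ∑ w : Fin n → A, C * (n : ℝ) ^ c * Set.indicator Hᶜ (ν n) (List.ofFn (g w)) :=
          Finset.sum_le_sum fun w _ => hpoint w
      _ = C * (n : ℝ) ^ c * ∑ w : Fin n → A, Set.indicator Hᶜ (ν n) (List.ofFn (g w)) := by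
          rw [Finset.mul_sum]
      _ ≤ C * (n : ℝ) ^ c * sphMeasure ν n Hᶜ := by
          refine mul_le_mul_of_nonneg_left ?_ hCn.le
          have himg : ∑ w : Fin n → A, Set.indicator Hᶜ (ν n) (List.ofFn (g w))
              = ∑ v ∈ Finset.univ.image g, Set.indicator Hᶜ (ν n) (List.ofFn v) :=
            (Finset.sum_image (f := fun v : Fin n → B => Set.indicator Hᶜ (ν n) (List.ofFn v))
              (g := g) (s := Finset.univ) fun x _ y _ h => hginj h).symm
          rw [himg]
          refine Finset.sum_le_sum_of_subset_of_nonneg (Finset.subset_univ _) ?_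
          intro v _ _
          exact Set.indicator_apply_nonneg (fun _ => hνpos n hn _ (List.length_ofFn (f := v)))
  -- part 2
  have part2 : ∀ k : ℕ,
      Filter.Tendsto (fun n : ℕ => (n : ℝ) ^ k * (1 - sphMeasure μ n (f ⁻¹' H)))
        Filter.atTop (nhds 0) := by
    intro k
    have hupper : Filter.Tendsto
        (fun n : ℕ => C * ((n : ℝ) ^ (k + c) * (1 - sphMeasure ν n H)))
        Filter.atTop (nhds 0) := by
      have := (hH₂ (k + c)).const_mul C
      simpa using this
    refine tendsto_of_tendsto_of_tendsto_of_le_of_le' tendsto_const_nhds hupper ?_ ?_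
    · filter_upwards [Filter.eventually_ge_atTop 1] with n hn
      exact mul_nonneg (pow_nonneg (Nat.cast_nonneg n) k) (key n hn).1
    · filter_upwards [Filter.eventually_ge_atTop 1] with n hn
      have h2 := (key n hn).2
      have hnk : (0:ℝ) ≤ (n : ℝ) ^ k := pow_nonneg (Nat.cast_nonneg n) k
      calc (n : ℝ) ^ k * (1 - sphMeasure μ n (f ⁻¹' H))
          ≤ (n : ℝ) ^ k * (C * (n : ℝ) ^ c * (1 - sphMeasure ν n H)) :=
            mul_le_mul_of_nonneg_left h2 hnk
        _ = C * ((n : ℝ) ^ (k + c) * (1 - sphMeasure ν n H)) := by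
            rw [pow_add]; ring
  refine ⟨?_, part2⟩
  have := part2 0
  simp only [pow_zero, one_mul] at this
  have h := this.const_sub 1
  simp only [sub_zero] at h
  convert h using 2 with n
  ring
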